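/- Suppose the grading (g_j)_{j∈ℤ} of M_N(ℂ) determined by h is good for the nilpotent matrix e ∈ g₂, i.e. the centralizer {x ∈ M_N(ℂ) : xe = ex} is contained in ⊕_{j≥0} g_j. Then the anticommutant {x ∈ M_N(ℂ) : xe + ex = 0} is also contained in ⊕_{j≥0} g_j. (This is the content of the statement that a ℤ-grading of q(N) is good for the nilpotent linear functional χ if and only if its restriction to the even part gl(N) is a good grading for e.) -/

import Mathlib

/-- The `ad h`-eigenspace grading of `M_N(ℂ)`:
`g_j = {x ∈ M_N(ℂ) : hx − xh = j·x}`. -/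
noncomputable def adGrading {N : ℕ} (h : Matrix (Fin N) (Fin N) ℂ) (j : ℤ) :
    Submodule ℂ (Matrix (Fin N) (Fin N) ℂ) where
  carrier := {x | h * x - x * h = (j : ℂ) • x}
  zero_mem' := by simp
  add_mem' := by
    intro a b ha hb
    simp only [Set.mem_setOf_eq] at ha hb ⊢
    rw [smul_add, ← ha, ← hb]
    noncomm_ring
  smul_mem' := by
    intro c a ha
    simp only [Set.mem_setOf_eq] at ha ⊢
    rw [mul_smul_comm, smul_mul_assoc, ← smul_sub, ha]
    exact smul_comm _ _ _

open NormedSpace in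
/-- If `A * B = B * C`, then `exp A * B = B * exp C`. -/
theorem exp_mul_of_intertwine {N : ℕ} (A B C : Matrix (Fin N) (Fin N) ℂ)
    (hABC : A * B = B * C) : exp A * B = B * exp C := by
  letI : SeminormedRing (Matrix (Fin N) (Fin N) ℂ) := Matrix.linftyOpSemiNormedRing
  letI : NormedRing (Matrix (Fin N) (Fin N) ℂ) := Matrix.linftyOpNormedRing
  letI : NormedAlgebra ℂ (Matrix (Fin N) (Fin N) ℂ) := Matrix.linftyOpNormedAlgebra
  have hpow : ∀ n : ℕ, A ^ n * B = B * C ^ n := by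
    intro n
    induction n with
    | zero => simp
    | succ n ih =>
      rw [pow_succ, pow_succ, mul_assoc, hABC, ← mul_assoc, ih, mul_assoc]
  rw [exp_eq_tsum ℂ]
  beta_reduce
  erw [← Summable.tsum_mul_right B (expSeries_summable' (𝕂 := ℂ) A),
    ← Summable.tsum_mul_left B (expSeries_summable' (𝕂 := ℂ) C)]
  exact tsum_congr fun n => by rw [smul_mul_assoc, mul_smul_comm, hpow n]

/-- Left multiplication by an element commuting with `h` preserves `⨆ j ≥ 0, adGrading h j`. -/
theorem mul_mem_iSup_adGrading {N : ℕ} (h z : Matrix (Fin N) (Fin N) ℂ)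
    (hz : h * z = z * h) {x : Matrix (Fin N) (Fin N) ℂ}
    (hx : x ∈ ⨆ j ≥ (0 : ℤ), adGrading h j) :
    z * x ∈ ⨆ j ≥ (0 : ℤ), adGrading h j := by
  have key : Submodule.map (LinearMap.mulLeft ℂ z) (⨆ j ≥ (0 : ℤ), adGrading h j) ≤
      ⨆ j ≥ (0 : ℤ), adGrading h j := by
    simp only [Submodule.map_iSup]
    refine iSup_le fun j => iSup_le fun hj => ?_
    refine le_trans ?_ (le_iSup_of_le j (le_iSup_of_le hj le_rfl))
    rintro _ ⟨y, hy, rfl⟩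
    have hy' : h * y - y * h = (j : ℂ) • y := hy
    show h * (z * y) - (z * y) * h = (j : ℂ) • (z * y)
    calc h * (z * y) - (z * y) * h = z * (h * y - y * h) := by
          rw [← mul_assoc, hz, mul_assoc, mul_assoc, mul_sub]
      _ = (j : ℂ) • (z * y) := by rw [hy', mul_smul_comm]
  exact key ⟨x, hx, rfl⟩

/-- Suppose the grading `(g_j)_{j∈ℤ}` of `M_N(ℂ)` determined by `h` is good
for the nilpotent matrix `e ∈ g₂`, i.e. the centralizer `{x : xe = ex}` is contained in
`⊕_{j≥0} g_j`. Then the anticommutant `{x : xe + ex = 0}` is also contained in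
`⊕_{j≥0} g_j`. -/
theorem stmt2 {N : ℕ} (h e : Matrix (Fin N) (Fin N) ℂ)
    (hinternal : DirectSum.IsInternal (adGrading h))
    (hnil : IsNilpotent e)
    (he : e ∈ adGrading h 2)
    (hgood : ∀ x : Matrix (Fin N) (Fin N) ℂ, x * e = e * x →
      x ∈ ⨆ j ≥ (0 : ℤ), adGrading h j) :
    ∀ x : Matrix (Fin N) (Fin N) ℂ, x * e + e * x = 0 →
      x ∈ ⨆ j ≥ (0 : ℤ), adGrading h j := by
  letI : SeminormedRing (Matrix (Fin N) (Fin N) ℂ) := Matrix.linftyOpSemiNormedRing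
  letI : NormedRing (Matrix (Fin N) (Fin N) ℂ) := Matrix.linftyOpNormedRing
  letI : NormedAlgebra ℂ (Matrix (Fin N) (Fin N) ℂ) := Matrix.linftyOpNormedAlgebra
  letI : NormedAlgebra ℚ (Matrix (Fin N) (Fin N) ℂ) := Matrix.linftyOpNormedAlgebra
  intro x hx
  set c : ℂ := (Real.pi : ℂ) * Complex.I / 2 with hc
  set H : Matrix (Fin N) (Fin N) ℂ := c • h with hH
  have he' : h * e - e * h = ((2 : ℤ) : ℂ) • e := he
  -- the intertwining relation H * e = e * (H + (π i) • 1)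
  have hinter : H * e = e * (H + ((Real.pi : ℂ) * Complex.I) • (1 : Matrix (Fin N) (Fin N) ℂ)) := by
    have h1 : H * e - e * H = ((Real.pi : ℂ) * Complex.I) • e := by
      rw [hH, smul_mul_assoc, mul_smul_comm, ← smul_sub, he', smul_smul]
      congr 1
      push_cast [hc]
      ring
    clear_value H
    calc H * e = e * H + ((Real.pi : ℂ) * Complex.I) • e := by rw [← h1]; abel
      _ = e * (H + ((Real.pi : ℂ) * Complex.I) • (1 : Matrix (Fin N) (Fin N) ℂ)) := by
          rw [mul_add, mul_smul_comm, mul_one]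
  -- s := exp H anticommutes with e
  have hexp1 : NormedSpace.exp H * e =
      e * NormedSpace.exp (H + ((Real.pi : ℂ) * Complex.I) • (1 : Matrix (Fin N) (Fin N) ℂ)) :=
    exp_mul_of_intertwine _ _ _ hinter
  have hscal : NormedSpace.exp (H + ((Real.pi : ℂ) * Complex.I) • (1 : Matrix (Fin N) (Fin N) ℂ))
      = - NormedSpace.exp H := by
    have hcomm : Commute H (((Real.pi : ℂ) * Complex.I) • (1 : Matrix (Fin N) (Fin N) ℂ)) := by
      simp [Commute, SemiconjBy, mul_smul_comm, smul_mul_assoc]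
    erw [NormedSpace.exp_add_of_commute hcomm]
    have : ((Real.pi : ℂ) * Complex.I) • (1 : Matrix (Fin N) (Fin N) ℂ)
        = algebraMap ℂ (Matrix (Fin N) (Fin N) ℂ) ((Real.pi : ℂ) * Complex.I) := by
      rw [Algebra.algebraMap_eq_smul_one]
    rw [this, ← NormedSpace.algebraMap_exp_comm, ← Complex.exp_eq_exp_ℂ, Complex.exp_pi_mul_I]
    simp [Algebra.algebraMap_eq_smul_one]
    rfl
  have hanti : NormedSpace.exp H * e = - (e * NormedSpace.exp H) := by
    rw [hexp1, hscal, mul_neg]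
  -- exp H * x commutes with e
  have hcomm : (NormedSpace.exp H * x) * e = e * (NormedSpace.exp H * x) := by
    have hx' : x * e = - (e * x) := by rw [eq_neg_iff_add_eq_zero]; exact hx
    calc (NormedSpace.exp H * x) * e = NormedSpace.exp H * (x * e) := by rw [mul_assoc]
      _ = - (NormedSpace.exp H * e) * x := by rw [hx']; noncomm_ring
      _ = (e * NormedSpace.exp H) * x := by rw [hanti]; noncomm_ring
      _ = e * (NormedSpace.exp H * x) := by rw [mul_assoc]
  have hy := hgood _ hcomm
  -- x = exp (-H) * (exp H * x)
  have hinv : NormedSpace.exp (-H) * NormedSpace.exp H = 1 := by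
    erw [← NormedSpace.exp_add_of_commute ((Commute.refl H).neg_left), neg_add_cancel,
      NormedSpace.exp_zero]
  have hxeq : x = NormedSpace.exp (-H) * (NormedSpace.exp H * x) := by
    rw [← mul_assoc, hinv, one_mul]
  rw [hxeq]
  refine mul_mem_iSup_adGrading h _ ?_ hy
  -- exp(-H) commutes with h
  have hch : Commute (-H) h := by
    simp [hH, Commute, SemiconjBy, mul_smul_comm, smul_mul_assoc]
  exact (hch.exp_left.eq).symm
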